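/- For every n ≥ 1, ∫₀^∞ e^{-t} |t^{n-1}/(n-1)! − tⁿ/n!| dt = 2 e^{-n} nⁿ / n!. Consequently, for any bounded measurable g on ℝ, |∫₀^∞ g(−t)e^{-t} t^{n-1}/(n-1)! dt − ∫₀^∞ g(−t)e^{-t} tⁿ/n! dt| ≤ 2‖g‖_∞ e^{-n} nⁿ/n!. -/

import Mathlib

open Filter MeasureTheory Set Topology

lemma integ_exp_pow (k : ℕ) :
    IntegrableOn (fun t : ℝ => Real.exp (-t) * t ^ k) (Ioi 0) := by
  have h := Real.GammaIntegral_convergent (s := (k : ℝ) + 1) (by positivity)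
  refine h.congr_fun (fun x hx => ?_) measurableSet_Ioi
  rw [show ((k:ℝ) + 1) - 1 = (k:ℝ) by ring]
  simp only [Real.rpow_natCast]

lemma hderiv_F (n : ℕ) (hn : 1 ≤ n) (t : ℝ) :
    HasDerivAt (fun t : ℝ => Real.exp (-t) * t ^ n / n.factorial)
      (Real.exp (-t) * (t ^ (n-1) / (n-1).factorial - t ^ n / n.factorial)) t := by
  have h1 : HasDerivAt (fun t : ℝ => Real.exp (-t)) (-Real.exp (-t)) t := by
    exact ((Real.hasDerivAt_exp (-t)).comp t (hasDerivAt_neg t)).congr_deriv (by ring)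
  have h2 : HasDerivAt (fun t : ℝ => t ^ n) (n * t ^ (n-1)) t := hasDerivAt_pow n t
  have h := (h1.mul h2).div_const (n.factorial : ℝ)
  refine h.congr_deriv ?_
  have hfac : (n.factorial : ℝ) = n * (n-1).factorial := by
    exact_mod_cast congrArg (Nat.cast : ℕ → ℝ) (Nat.mul_factorial_pred (by omega)).symm
  have h0 : ((n-1).factorial : ℝ) ≠ 0 := Nat.cast_ne_zero.2 (Nat.factorial_ne_zero _)
  have hn0 : (n : ℝ) ≠ 0 := Nat.cast_ne_zero.2 (by omega)
  rw [hfac]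
  field_simp
  ring

lemma sign_le (n : ℕ) (hn : 1 ≤ n) {t : ℝ} (h0 : 0 ≤ t) (htn : t ≤ n) :
    0 ≤ t ^ (n-1) / (n-1).factorial - t ^ n / n.factorial := by
  have hf1 : (0:ℝ) < (n-1).factorial := by exact_mod_cast Nat.factorial_pos _
  have hf2 : (0:ℝ) < n.factorial := by exact_mod_cast Nat.factorial_pos _
  rw [sub_nonneg, div_le_div_iff₀ hf2 hf1]
  have hpow : t ^ n = t ^ (n-1) * t := by rw [← pow_succ]; congr 1; omega
  calc t ^ n * (n-1).factorial = t ^ (n-1) * t * (n-1).factorial := by rw [hpow]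
    _ ≤ t ^ (n-1) * n * (n-1).factorial := by gcongr <;> positivity
    _ = t ^ (n-1) * n.factorial := by
        rw [mul_assoc]
        congr 1
        exact_mod_cast (Nat.mul_factorial_pred (by omega))

lemma sign_ge (n : ℕ) (hn : 1 ≤ n) {t : ℝ} (htn : (n:ℝ) ≤ t) :
    t ^ (n-1) / (n-1).factorial - t ^ n / n.factorial ≤ 0 := by
  have h0 : (0:ℝ) ≤ t := le_trans (by positivity) htn
  have hf1 : (0:ℝ) < (n-1).factorial := by exact_mod_cast Nat.factorial_pos _
  have hf2 : (0:ℝ) < n.factorial := by exact_mod_cast Nat.factorial_pos _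
  rw [sub_nonpos, div_le_div_iff₀ hf1 hf2]
  have hpow : t ^ n = t ^ (n-1) * t := by rw [← pow_succ]; congr 1; omega
  calc t ^ (n-1) * n.factorial = t ^ (n-1) * (n * (n-1).factorial) := by
        congr 1; exact_mod_cast (Nat.mul_factorial_pred (by omega)).symm
    _ = t ^ (n-1) * n * (n-1).factorial := by ring
    _ ≤ t ^ (n-1) * t * (n-1).factorial := by gcongr <;> positivity
    _ = t ^ n * (n-1).factorial := by rw [hpow]

lemma fint (n : ℕ) :
    IntegrableOn (fun t : ℝ =>
      Real.exp (-t) * (t ^ (n-1) / (n-1).factorial - t ^ n / n.factorial)) (Ioi 0) := by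
  have h1 := (integ_exp_pow (n-1)).div_const ((n-1).factorial : ℝ)
  have h2 := (integ_exp_pow n).div_const (n.factorial : ℝ)
  refine IntegrableOn.congr_fun (h1.sub h2) (fun x _ => ?_) measurableSet_Ioi
  simp only [Pi.sub_apply]
  ring

lemma part1 (n : ℕ) (hn : 1 ≤ n) :
    (∫ t in Ioi (0:ℝ),
        Real.exp (-t) * |t ^ (n-1) / (n-1).factorial - t ^ n / n.factorial|)
      = 2 * Real.exp (-(n:ℝ)) * (n:ℝ) ^ n / n.factorial := by
  set f : ℝ → ℝ := fun t =>
    Real.exp (-t) * (t ^ (n-1) / (n-1).factorial - t ^ n / n.factorial) with hfdef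
  set F : ℝ → ℝ := fun t => Real.exp (-t) * t ^ n / n.factorial with hFdef
  have hfint : IntegrableOn f (Ioi 0) := fint n
  have hcontF : Continuous F := by
    apply Continuous.div_const
    exact (Real.continuous_exp.comp continuous_neg).mul (continuous_pow n)
  have hcontf : Continuous f := by
    apply (Real.continuous_exp.comp continuous_neg).mul
    exact ((continuous_pow _).div_const _).sub ((continuous_pow _).div_const _)
  have hn0 : (0:ℝ) ≤ (n:ℝ) := by positivity
  have habs : ∀ t : ℝ,
      Real.exp (-t) * |t ^ (n-1) / (n-1).factorial - t ^ n / n.factorial| = |f t| := by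
    intro t
    rw [hfdef, abs_mul, abs_of_pos (Real.exp_pos _)]
  simp_rw [habs]
  have hsplit : (∫ t in Ioi (0:ℝ), |f t|)
      = (∫ t in Ioc (0:ℝ) n, |f t|) + ∫ t in Ioi (n:ℝ), |f t| := by
    rw [← Ioc_union_Ioi_eq_Ioi hn0]
    exact setIntegral_union (Ioc_disjoint_Ioi le_rfl) measurableSet_Ioi
      (IntegrableOn.mono_set hfint.abs Ioc_subset_Ioi_self)
      (IntegrableOn.mono_set hfint.abs (Ioi_subset_Ioi hn0))
  have hIoc : (∫ t in Ioc (0:ℝ) n, |f t|) = F n - F 0 := by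
    rw [setIntegral_congr_fun measurableSet_Ioc (g := f)
      (fun t ht => abs_of_nonneg (mul_nonneg (Real.exp_pos _).le
        (sign_le n hn ht.1.le ht.2)))]
    rw [← intervalIntegral.integral_of_le hn0]
    exact intervalIntegral.integral_eq_sub_of_hasDerivAt
      (fun t _ => hderiv_F n hn t) (hcontf.intervalIntegrable _ _)
  have htend : Tendsto F atTop (𝓝 0) := by
    have h := (Real.tendsto_pow_mul_exp_neg_atTop_nhds_zero n).div_const (n.factorial : ℝ)
    simpa [hFdef, mul_comm] using h
  have hIoi' : (∫ t in Ioi (n:ℝ), f t) = 0 - F n :=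
    MeasureTheory.integral_Ioi_of_hasDerivAt_of_tendsto
      (hcontF.continuousWithinAt) (fun t _ => hderiv_F n hn t)
      (IntegrableOn.mono_set hfint (Ioi_subset_Ioi hn0)) htend
  have hIoi : (∫ t in Ioi (n:ℝ), |f t|) = F n := by
    rw [setIntegral_congr_fun measurableSet_Ioi (g := fun t => -f t)
      (fun t ht => abs_of_nonpos (mul_nonpos_of_nonneg_of_nonpos (Real.exp_pos _).le
        (sign_ge n hn (le_of_lt ht))))]
    rw [integral_neg, hIoi']
    ring
  have hF0 : F 0 = 0 := by simp [hFdef, zero_pow (by omega : n ≠ 0)]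
  rw [hsplit, hIoc, hIoi, hF0, hFdef]
  ring

lemma gint (k : ℕ) (g : ℝ → ℝ) (C : ℝ) (hg : Measurable g) (hC : ∀ x, |g x| ≤ C) :
    IntegrableOn (fun t : ℝ => g (-t) * Real.exp (-t) * t ^ k / k.factorial) (Ioi 0) := by
  have hb : Integrable (fun t : ℝ => C * (Real.exp (-t) * t ^ k / (k.factorial : ℝ)))
      (volume.restrict (Ioi 0)) := ((integ_exp_pow k).div_const _).const_mul C
  refine hb.mono' ?_ ?_
  · exact ((((hg.comp measurable_neg).mul
      (Real.measurable_exp.comp measurable_neg)).mul (measurable_id.pow_const k)).div_const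
      _).aestronglyMeasurable
  · filter_upwards [ae_restrict_mem measurableSet_Ioi] with t ht
    have ht0 : (0:ℝ) ≤ t := le_of_lt ht
    have hfacpos : (0:ℝ) < k.factorial := by exact_mod_cast Nat.factorial_pos _
    have h1 : ‖g (-t) * Real.exp (-t) * t ^ k / k.factorial‖
        = |g (-t)| * (Real.exp (-t) * t ^ k / k.factorial) := by
      rw [Real.norm_eq_abs, abs_div, abs_mul, abs_mul, abs_of_pos (Real.exp_pos _),
        abs_of_nonneg (pow_nonneg ht0 k), abs_of_pos hfacpos]
      ring
    rw [h1]
    exact mul_le_mul_of_nonneg_right (hC _) (by positivity)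

theorem stmt13 (n : ℕ) (hn : 1 ≤ n) :
    (∫ t in Ioi (0:ℝ),
        Real.exp (-t) * |t ^ (n-1) / (n-1).factorial - t ^ n / n.factorial|)
      = 2 * Real.exp (-(n:ℝ)) * (n:ℝ) ^ n / n.factorial ∧
    (∀ (g : ℝ → ℝ) (C : ℝ), Measurable g → (∀ x, |g x| ≤ C) →
      |(∫ t in Ioi (0:ℝ), g (-t) * Real.exp (-t) * t ^ (n-1) / (n-1).factorial)
        - ∫ t in Ioi (0:ℝ), g (-t) * Real.exp (-t) * t ^ n / n.factorial|
        ≤ 2 * C * Real.exp (-(n:ℝ)) * (n:ℝ) ^ n / n.factorial) := by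
  refine ⟨part1 n hn, fun g C hg hC => ?_⟩
  set f : ℝ → ℝ := fun t =>
    Real.exp (-t) * (t ^ (n-1) / (n-1).factorial - t ^ n / n.factorial) with hfdef
  have hdiff : (∫ t in Ioi (0:ℝ), g (-t) * Real.exp (-t) * t ^ (n-1) / (n-1).factorial)
      - (∫ t in Ioi (0:ℝ), g (-t) * Real.exp (-t) * t ^ n / n.factorial)
      = ∫ t in Ioi (0:ℝ), g (-t) * f t := by
    rw [← integral_sub (gint (n-1) g C hg hC) (gint n g C hg hC)]
    refine setIntegral_congr_fun measurableSet_Ioi (fun t _ => ?_)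
    simp only [hfdef]
    ring
  rw [hdiff]
  have hbound : |∫ t in Ioi (0:ℝ), g (-t) * f t| ≤ ∫ t in Ioi (0:ℝ), C * |f t| := by
    rw [← Real.norm_eq_abs]
    refine norm_integral_le_of_norm_le ((fint n).abs.const_mul C) ?_
    filter_upwards [ae_restrict_mem measurableSet_Ioi] with t _
    rw [Real.norm_eq_abs, abs_mul]
    exact mul_le_mul_of_nonneg_right (hC _) (abs_nonneg _)
  refine hbound.trans (le_of_eq ?_)
  rw [integral_const_mul]
  have : (∫ t in Ioi (0:ℝ), |f t|)
      = ∫ t in Ioi (0:ℝ),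
          Real.exp (-t) * |t ^ (n-1) / (n-1).factorial - t ^ n / n.factorial| := by
    refine setIntegral_congr_fun measurableSet_Ioi (fun t _ => ?_)
    rw [hfdef, abs_mul, abs_of_pos (Real.exp_pos _)]
  rw [this, part1 n hn]
  ring
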